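/- Under the Setup, assume: r ≥ 2; |C| ≥ r; each family {p_c(h)}_{c∈C} is an (r,C)-partition system on U_h; ℰ is nonempty; every label set L_j is nonempty; every vertex of G has the same degree; and, for some real δ ≥ 0 with r⁷δ < 1, every labeling σ (with σ(v) ∈ L_{j(v)} for all v) weakly satisfies at most δ|ℰ| edges of G. Then for every finite set 𝒳' of pairs (v,ℓ) with ℓ ∈ L_{j(v)} and |𝒳'| = |𝒱|, there exists an element e ∈ U with Cong(e, 𝒳') ≥ r. -/

import Mathlib

/-- `v` is a vertex of the edge `h` (edges of an `r`-partite hypergraph are given as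
tuples of their `r` vertices, one from each part). -/
def MemEdge {r : ℕ} {V : Type} (h : Fin r → V) (v : V) : Prop := ∃ i : Fin r, h i = v

/-- The set `X(v,ℓ) = ⋃_{h ∈ E : v ∈ h} A^{j(v)}_{π_h^{j(v)}(ℓ)}(h)`. -/
def Xset {r : ℕ} {V L C U : Type} (part : V → Fin r) (E : Set (Fin r → V))
    (π : (Fin r → V) → Fin r → L → C) (A : (Fin r → V) → C → Fin r → Set U)
    (v : V) (ℓ : L) : Set U :=
  {e : U | ∃ h ∈ E, MemEdge h v ∧ e ∈ A h (π h (part v) ℓ) (part v)}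

/-- The congestion `Cong(e, 𝒳') = |{(v,ℓ) ∈ 𝒳' : e ∈ X(v,ℓ)}|`. -/
noncomputable def Cong {r : ℕ} {V L C U : Type} (part : V → Fin r) (E : Set (Fin r → V))
    (π : (Fin r → V) → Fin r → L → C) (A : (Fin r → V) → C → Fin r → Set U)
    (X' : Set (V × L)) (e : U) : ℕ :=
  {p ∈ X' | e ∈ Xset part E π A p.1 p.2}.ncard

lemma catch_lemma {r : ℕ} (hrpos : 0 < r) {V L C U : Type} [Fintype C]
    (hC : r ≤ Fintype.card C)
    (part : V → Fin r) (E : Set (Fin r → V))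
    (π : (Fin r → V) → Fin r → L → C)
    (A : (Fin r → V) → C → Fin r → Set U)
    (X' : Set (V × L)) (hX'fin : X'.Finite)
    (h : Fin r → V) (hh : h ∈ E)
    (hAint : ∀ cs : Fin r → C, Function.Injective cs → ∀ js : Fin r → Fin r,
      (⋂ i : Fin r, A h (cs i) (js i)).Nonempty)
    (P : Finset (V × L)) (hPX : ∀ p ∈ P, p ∈ X')
    (hPmem : ∀ p ∈ P, MemEdge h p.1)
    (hPcard : r ≤ P.card)
    (hnocol : ∀ p ∈ P, ∀ q ∈ P, π h (part p.1) p.2 = π h (part q.1) q.2 →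
      part p.1 = part q.1) :
    ∃ e : U, r ≤ Cong part E π A X' e := by
  classical
  set cl : V × L → Fin r × C := fun p => (part p.1, π h (part p.1) p.2) with hcl
  set Q : Finset (Fin r × C) := P.image cl with hQ
  have hQsnd : ∀ s ∈ Q, ∀ s' ∈ Q, s.2 = s'.2 → s = s' := by
    intro s hs s' hs' h2
    obtain ⟨p, hp, rfl⟩ := Finset.mem_image.1 hs
    obtain ⟨q, hq, rfl⟩ := Finset.mem_image.1 hs'
    have := hnocol p hp q hq h2
    simp only [hcl, Prod.ext_iff]
    exact ⟨this, h2⟩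
  obtain ⟨S', hS'sub, hS'card⟩ : ∃ S' ⊆ Q, S'.card = min r Q.card :=
    Finset.exists_subset_card_eq (min_le_right _ _)
  have hS'Q := hS'sub
  -- colors of S'
  set D0 : Finset C := S'.image Prod.snd with hD0
  have hD0card : D0.card = S'.card := by
    rw [hD0]
    apply Finset.card_image_of_injOn
    intro s hs s' hs' h2
    exact hQsnd s (hS'sub hs) s' (hS'sub hs') h2
  have hD0le : D0.card ≤ r := by rw [hD0card, hS'card]; exact min_le_left _ _
  obtain ⟨D, hD0D, hDsub, hDcard⟩ : ∃ D, D0 ⊆ D ∧ D ⊆ Finset.univ ∧ D.card = r :=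
    Finset.exists_subsuperset_card_eq (Finset.subset_univ _) hD0le (by simpa using hC)
  set eD := D.equivFin with heD
  set cs : Fin r → C := fun i => (eD.symm (Fin.cast hDcard.symm i) : C) with hcs
  have hcsinj : Function.Injective cs := by
    intro i i' hii
    have : eD.symm (Fin.cast hDcard.symm i) = eD.symm (Fin.cast hDcard.symm i') :=
      Subtype.ext hii
    have := eD.symm.injective this
    simpa [Fin.ext_iff] using congrArg Fin.val this
  have hcs_surj : ∀ c ∈ D, ∃ i, cs i = c := by
    intro c hc
    refine ⟨Fin.cast hDcard (eD ⟨c, hc⟩), ?_⟩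
    have h1 : Fin.cast hDcard.symm (Fin.cast hDcard (eD ⟨c, hc⟩)) = eD ⟨c, hc⟩ := by
      ext; simp
    have h2 : cs (Fin.cast hDcard (eD ⟨c, hc⟩))
        = (eD.symm (Fin.cast hDcard.symm (Fin.cast hDcard (eD ⟨c, hc⟩))) : C) := rfl
    rw [h2, h1, Equiv.symm_apply_apply]
  set js : Fin r → Fin r := fun i =>
    if hx : ∃ j, (j, cs i) ∈ S' then hx.choose else ⟨0, hrpos⟩ with hjs
  obtain ⟨e₀, he₀⟩ := hAint cs hcsinj js
  simp only [Set.mem_iInter] at he₀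
  have hcatch : ∀ p ∈ P, cl p ∈ S' → e₀ ∈ Xset part E π A p.1 p.2 := by
    intro p hp hps
    set c := π h (part p.1) p.2 with hc
    have hcD0 : c ∈ D0 := Finset.mem_image.2 ⟨cl p, hps, rfl⟩
    obtain ⟨i, hi⟩ := hcs_surj c (hD0D hcD0)
    have hx : ∃ j, (j, cs i) ∈ S' := ⟨part p.1, by rw [hi]; exact hps⟩
    have hjsi : js i = hx.choose := by rw [hjs]; exact dif_pos hx
    have hmem : (hx.choose, cs i) ∈ S' := hx.choose_spec
    have heq : (hx.choose, cs i) = cl p := by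
      apply hQsnd _ (hS'sub hmem) _ (hS'sub hps)
      simp [hi, hcl, hc]
    have hjeq : js i = part p.1 := by
      rw [hjsi]
      have := congrArg Prod.fst heq
      simpa [hcl] using this
    refine ⟨h, hh, hPmem p hp, ?_⟩
    have := he₀ i
    rwa [hi, hjeq] at this
  set P' : Finset (V × L) := P.filter (fun p => cl p ∈ S') with hP'
  have hP'r : r ≤ P'.card := by
    by_cases hq : r ≤ Q.card
    · have hS'r : S'.card = r := by rw [hS'card]; omega
      have hsurj : Set.SurjOn cl (P' : Set (V × L)) (S' : Set (Fin r × C)) := by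
        intro s hs
        obtain ⟨p, hp, rfl⟩ := Finset.mem_image.1 (hS'sub hs)
        exact ⟨p, by simp only [hP', Finset.coe_filter, Set.mem_setOf_eq]; exact ⟨hp, Finset.mem_coe.1 hs⟩, rfl⟩
      have := Finset.card_le_card_of_surjOn cl hsurj
      omega
    · have hS'eq : S' = Q := Finset.eq_of_subset_of_card_le hS'sub (by omega)
      have : P' = P := by
        rw [hP']
        apply Finset.filter_true_of_mem
        intro p hp
        rw [hS'eq]
        exact Finset.mem_image_of_mem cl hp
      rw [this]; exact hPcard
  refine ⟨e₀, ?_⟩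
  have hsub : (P' : Set (V × L)) ⊆ {p ∈ X' | e₀ ∈ Xset part E π A p.1 p.2} := by
    intro p hp
    simp only [hP', Finset.coe_filter, Set.mem_setOf_eq] at hp
    exact ⟨hPX p hp.1, hcatch p hp.1 hp.2⟩
  have hfin : {p ∈ X' | e₀ ∈ Xset part E π A p.1 p.2}.Finite :=
    hX'fin.subset (Set.sep_subset _ _)
  calc r ≤ P'.card := hP'r
    _ = (P' : Set (V × L)).ncard := (Set.ncard_coe_finset _).symm
    _ ≤ _ := Set.ncard_le_ncard hsub hfin

theorem stmt10' {r : ℕ} (hr : 2 ≤ r) {V L C U : Type} [Fintype V] [Fintype C]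
    (hC : r ≤ Fintype.card C)
    (part : V → Fin r) (E : Set (Fin r → V)) (hEfin : E.Finite) (hEne : E.Nonempty)
    (hE : ∀ h ∈ E, ∀ i : Fin r, part (h i) = i)
    (Lset : Fin r → Set L) (hLne : ∀ j, (Lset j).Nonempty)
    (π : (Fin r → V) → Fin r → L → C)
    (hdeg : ∀ v w : V, ({h ∈ E | MemEdge h v}).ncard = ({h ∈ E | MemEdge h w}).ncard)
    (δ : ℝ) (hδ : 0 ≤ δ) (hδr : (r : ℝ) ^ 7 * δ < 1)
    (hsound : ∀ σ : V → L, (∀ v : V, σ v ∈ Lset (part v)) →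
      (({h ∈ E | ∃ v v' : V, MemEdge h v ∧ MemEdge h v' ∧ v ≠ v' ∧
        π h (part v) (σ v) = π h (part v') (σ v')}).ncard : ℝ) ≤ δ * (E.ncard : ℝ))
    (X' : Set (V × L)) (hX'fin : X'.Finite) (hX'lab : ∀ p ∈ X', p.2 ∈ Lset (part p.1))
    (hX'card : X'.ncard = Fintype.card V)
    -- abstraction of the "catch" step and the contradiction hypothesis:
    (hcatch : ∀ h ∈ E, ∀ P : Finset (V × L), (∀ p ∈ P, p ∈ X') →
      (∀ p ∈ P, MemEdge h p.1) → r ≤ P.card →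
      (∀ p ∈ P, ∀ q ∈ P, π h (part p.1) p.2 = π h (part q.1) q.2 →
        part p.1 = part q.1) → False) : False := by
  classical
  have hpos : 0 < r := by omega
  set F := hX'fin.toFinset with hFdef
  set EF := hEfin.toFinset with hEFdef
  have hmemEF : ∀ g, g ∈ EF ↔ g ∈ E := fun g => hEfin.mem_toFinset
  have hmemF : ∀ p, p ∈ F ↔ p ∈ X' := fun p => hX'fin.mem_toFinset
  have hset : ∀ P : (Fin r → V) → Prop, ({h ∈ E | P h}).ncard = (EF.filter P).card := by
    intro P
    rw [← Set.ncard_coe_finset]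
    congr 1
    ext x
    simp only [Finset.coe_filter, Set.mem_setOf_eq, hmemEF x]
  have hmE : E.ncard = EF.card := by
    rw [Set.ncard_eq_toFinset_card E hEfin]
  obtain ⟨h₀, hh₀⟩ := hEne
  set v₀ := h₀ ⟨0, hpos⟩ with hv₀
  have hvedge : ∀ v : V, ∃ h ∈ E, MemEdge h v := by
    intro v
    have h1 := hdeg v v₀
    have h2 : 0 < ({h ∈ E | MemEdge h v₀}).ncard := by
      refine (Set.ncard_pos (hEfin.subset (Set.sep_subset _ _))).2 ?_
      exact ⟨h₀, hh₀, ⟨⟨0, hpos⟩, rfl⟩⟩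
    have h3 : {h ∈ E | MemEdge h v}.Nonempty :=
      Set.nonempty_of_ncard_ne_zero (by omega)
    obtain ⟨h, hh, hmv⟩ := h3
    exact ⟨h, hh, hmv⟩
  set k : V → ℕ := fun v => (F.filter (fun p => p.1 = v)).card with hk
  -- CASE 1 : some vertex has ≥ r labels
  by_cases hbig : ∃ v, r ≤ k v
  · obtain ⟨v, hv⟩ := hbig
    obtain ⟨P, hPsub, hPcard⟩ := Finset.exists_subset_card_eq hv
    obtain ⟨h, hh, hmv⟩ := hvedge v
    have hfst : ∀ p ∈ P, p.1 = v := fun p hp => (Finset.mem_filter.1 (hPsub hp)).2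
    refine hcatch h hh P (fun p hp => (hmemF p).1 (Finset.mem_filter.1 (hPsub hp)).1)
      (fun p hp => by rw [hfst p hp]; exact hmv) (le_of_eq hPcard.symm) ?_
    intro p hp q hq _
    rw [hfst p hp, hfst q hq]
  -- CASE 2 : every vertex has ≤ r-1 labels
  push_neg at hbig
  set deg : V → ℕ := fun v => (EF.filter (fun g => MemEdge g v)).card with hdegdef
  have hdegEq : ∀ v w, deg v = deg w := by
    intro v w
    have := hdeg v w
    rwa [hset, hset] at this
  set nh : (Fin r → V) → ℕ := fun g => (F.filter (fun p => MemEdge g p.1)).card with hnh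
  have hginj : ∀ g ∈ EF, Function.Injective g := by
    intro g hg i i' hii
    have h1 := hE g ((hmemEF g).1 hg) i
    have h2 := hE g ((hmemEF g).1 hg) i'
    rw [← h1, ← h2, hii]
  have hvert : ∀ g ∈ EF, (Finset.univ.filter (fun v => MemEdge g v)).card = r := by
    intro g hg
    have himg : Finset.univ.filter (fun v => MemEdge g v) = Finset.image g Finset.univ := by
      ext v
      simp [MemEdge, eq_comm]
    rw [himg, Finset.card_image_of_injective _ (hginj g hg)]
    simp
  have Inh : ∀ g ∈ EF, nh g = ∑ v ∈ Finset.univ.filter (fun v => MemEdge g v), k v := by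
    intro g hg
    simp only [hnh]
    rw [Finset.card_eq_sum_card_fiberwise
      (f := Prod.fst) (t := Finset.univ.filter (fun v => MemEdge g v))
      (fun p hp => by simp [(Finset.mem_filter.1 hp).2])]
    refine Finset.sum_congr rfl ?_
    intro v hv
    rw [Finset.filter_filter]
    congr 1
    apply Finset.filter_congr
    intro p _
    simp only [Finset.mem_filter] at hv
    constructor
    · exact fun hx => hx.2
    · exact fun hx => ⟨by rw [hx]; exact hv.2, hx⟩
  have S1 : ∑ g ∈ EF, nh g = ∑ v : V, deg v * k v := by
    calc ∑ g ∈ EF, nh g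
        = ∑ g ∈ EF, ∑ v ∈ Finset.univ.filter (fun v => MemEdge g v), k v :=
          Finset.sum_congr rfl Inh
      _ = ∑ g ∈ EF, ∑ v : V, if MemEdge g v then k v else 0 := by
          refine Finset.sum_congr rfl fun g _ => ?_
          rw [Finset.sum_filter]
      _ = ∑ v : V, ∑ g ∈ EF, if MemEdge g v then k v else 0 := Finset.sum_comm
      _ = ∑ v : V, deg v * k v := by
          refine Finset.sum_congr rfl fun v _ => ?_
          rw [← Finset.sum_filter, Finset.sum_const, smul_eq_mul]
  have S2 : ∑ v : V, deg v = EF.card * r := by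
    calc ∑ v : V, deg v
        = ∑ v : V, ∑ g ∈ EF, if MemEdge g v then 1 else 0 := by
          refine Finset.sum_congr rfl fun v _ => ?_
          simp only [hdegdef]; rw [Finset.card_filter]
      _ = ∑ g ∈ EF, ∑ v : V, if MemEdge g v then 1 else 0 := Finset.sum_comm
      _ = ∑ g ∈ EF, (Finset.univ.filter (fun v => MemEdge g v)).card := by
          refine Finset.sum_congr rfl fun g _ => ?_
          rw [Finset.card_filter]
      _ = ∑ g ∈ EF, r := Finset.sum_congr rfl hvert
      _ = EF.card * r := by rw [Finset.sum_const, smul_eq_mul]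
  have Sk : ∑ v : V, k v = Fintype.card V := by
    have h1 : F.card = ∑ v : V, k v :=
      Finset.card_eq_sum_card_fiberwise (f := Prod.fst) (fun p _ => Finset.mem_univ _)
    have h2 : F.card = Fintype.card V := by
      rw [hFdef, ← Set.ncard_eq_toFinset_card X' hX'fin, hX'card]
    omega
  set m := EF.card with hm
  have hm0 : 0 < m := Finset.card_pos.2 ⟨h₀, (hmemEF h₀).2 hh₀⟩
  set d := deg v₀ with hd
  have hdn : d * Fintype.card V = m * r := by
    have : ∑ v : V, deg v = ∑ v : V, d := Finset.sum_congr rfl fun v _ => hdegEq v v₀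
    rw [this, Finset.sum_const, smul_eq_mul, Finset.card_univ, mul_comm] at S2
    exact S2
  have Stotal : ∑ g ∈ EF, nh g = r * m := by
    rw [S1]
    have : ∑ v : V, deg v * k v = d * ∑ v : V, k v := by
      rw [Finset.mul_sum]
      exact Finset.sum_congr rfl fun v _ => by rw [hdegEq v v₀]
    rw [this, Sk, hdn, mul_comm]
  -- conflicted edges
  set Conf : (Fin r → V) → Prop := fun g => ∃ p ∈ X', ∃ q ∈ X', MemEdge g p.1 ∧
    MemEdge g q.1 ∧ p.1 ≠ q.1 ∧ π g (part p.1) p.2 = π g (part q.1) q.2 with hConf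
  have hok : ∀ g ∈ EF, ¬ Conf g → nh g ≤ r - 1 := by
    intro g hg hnc
    by_contra hle
    have hge : r ≤ nh g := by omega
    refine hcatch g ((hmemEF g).1 hg) (F.filter (fun p => MemEdge g p.1))
      (fun p hp => (hmemF p).1 (Finset.mem_filter.1 hp).1)
      (fun p hp => (Finset.mem_filter.1 hp).2) hge ?_
    intro p hp q hq hcol
    by_contra hne
    have hpq : p.1 ≠ q.1 := fun e => hne (by rw [e])
    exact hnc ⟨p, (hmemF p).1 (Finset.mem_filter.1 hp).1, q,
      (hmemF q).1 (Finset.mem_filter.1 hq).1,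
      (Finset.mem_filter.1 hp).2, (Finset.mem_filter.1 hq).2, hpq, hcol⟩
  have hnhbound : ∀ g ∈ EF, nh g ≤ r * (r - 1) := by
    intro g hg
    rw [Inh g hg]
    calc ∑ v ∈ Finset.univ.filter (fun v => MemEdge g v), k v
        ≤ ∑ _v ∈ Finset.univ.filter (fun v => MemEdge g v), (r - 1) :=
          Finset.sum_le_sum fun v _ => by have := hbig v; omega
      _ = r * (r - 1) := by rw [Finset.sum_const, smul_eq_mul, hvert g hg]
  set B := EF.filter Conf with hB
  have hsplit : r * m ≤ B.card * (r * (r - 1)) + m * (r - 1) := by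
    rw [← Stotal, ← Finset.sum_filter_add_sum_filter_not EF Conf nh]
    gcongr ?_ + ?_
    · calc ∑ g ∈ B, nh g ≤ ∑ g ∈ B, r * (r - 1) :=
            Finset.sum_le_sum fun g hg => hnhbound g (Finset.mem_filter.1 hg).1
        _ = B.card * (r * (r - 1)) := by rw [Finset.sum_const, smul_eq_mul]
    · calc ∑ g ∈ EF.filter (fun g => ¬ Conf g), nh g
          ≤ ∑ g ∈ EF.filter (fun g => ¬ Conf g), (r - 1) :=
            Finset.sum_le_sum fun g hg =>
              hok g (Finset.mem_filter.1 hg).1 (Finset.mem_filter.1 hg).2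
        _ = (EF.filter (fun g => ¬ Conf g)).card * (r - 1) := by
            rw [Finset.sum_const, smul_eq_mul]
        _ ≤ m * (r - 1) := Nat.mul_le_mul_right _ (Finset.card_filter_le _ _)
  have key1 : m ≤ B.card * (r * (r - 1)) := by
    have e1 : r * m = m + m * (r - 1) := by
      have hr1 : r - 1 + 1 = r := Nat.succ_pred_eq_of_pos hpos
      calc r * m = ((r - 1) + 1) * m := by rw [hr1]
        _ = m + m * (r - 1) := by ring
    rw [e1] at hsplit
    omega
  -- family of labelings
  set dfl : V → L := fun w => (hLne (part w)).some with hdfl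
  set labs : V → List L := fun w => ((F.filter (fun p => p.1 = w)).image Prod.snd).toList
    with hlabs
  set lab : V → ℕ → L := fun w a => (labs w).getD a (dfl w) with hlab
  have hlabLset : ∀ w a, lab w a ∈ Lset (part w) := by
    intro w a
    by_cases hlen : a < (labs w).length
    · simp only [hlab]
      rw [List.getD_eq_getElem _ _ hlen]
      have hm' : (labs w)[a] ∈ labs w := List.getElem_mem _
      simp only [hlabs] at hm'
      simp only [Finset.mem_toList, Finset.mem_image, Finset.mem_filter] at hm'
      obtain ⟨p, ⟨hpF, hpw⟩, hpe⟩ := hm'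
      have := hX'lab p ((hmemF p).1 hpF)
      rw [hpw] at this
      rw [← hpe]
      exact this
    · simp only [hlab]
      rw [List.getD_eq_default _ _ (le_of_not_gt hlen)]
      exact (hLne (part w)).some_mem
  have hlablen : ∀ w, (labs w).length ≤ r - 1 := by
    intro w
    simp only [hlabs, Finset.length_toList]
    calc ((F.filter (fun p => p.1 = w)).image Prod.snd).card
        ≤ (F.filter (fun p => p.1 = w)).card := Finset.card_image_le
      _ ≤ r - 1 := by have := hbig w; simp only [hk] at this; omega
  have hlabidx : ∀ p ∈ F, ∃ a : Fin (r - 1), lab p.1 a = p.2 := by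
    intro p hp
    have hmem : p.2 ∈ labs p.1 := by
      simp only [hlabs]
      simp only [Finset.mem_toList, Finset.mem_image, Finset.mem_filter]
      exact ⟨p, ⟨hp, rfl⟩, rfl⟩
    have hlt : (labs p.1).idxOf p.2 < (labs p.1).length := List.idxOf_lt_length_iff.2 hmem
    refine ⟨⟨(labs p.1).idxOf p.2, lt_of_lt_of_le hlt (hlablen p.1)⟩, ?_⟩
    simp only [hlab]
    rw [List.getD_eq_getElem _ _ hlt, List.getElem_idxOf]
  set σf : (Fin r × Fin (r - 1) × Fin (r - 1)) → V → L :=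
    fun t w => if part w = t.1 then lab w t.2.1 else lab w t.2.2 with hσf
  have hσL : ∀ t w, σf t w ∈ Lset (part w) := by
    intro t w
    simp only [hσf]
    split <;> exact hlabLset w _
  set Sat : (Fin r × Fin (r - 1) × Fin (r - 1)) → Finset (Fin r → V) :=
    fun t => @Finset.filter _ (fun g => ∃ v v' : V, MemEdge g v ∧ MemEdge g v' ∧ v ≠ v' ∧
      π g (part v) (σf t v) = π g (part v') (σf t v'))
      (fun _ => Classical.propDecidable _) EF with hSat
  have hsat : ∀ t, ((Sat t).card : ℝ) ≤ δ * (m : ℝ) := by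
    intro t
    have := hsound (σf t) (fun w => hσL t w)
    rw [hset, hmE] at this
    simp only [hSat, hm]
    exact this
  have hBsub : B ⊆ Finset.univ.biUnion Sat := by
    intro g hg
    obtain ⟨hgEF, p, hpX, q, hqX, hmp, hmq, hpq, hcol⟩ := Finset.mem_filter.1 hg
    have hgE := (hmemEF g).1 hgEF
    obtain ⟨i, hi⟩ := hmp
    obtain ⟨i', hi'⟩ := hmq
    have hpart : part p.1 ≠ part q.1 := by
      intro hpe
      apply hpq
      rw [← hi, ← hi'] at hpe ⊢
      rw [hE g hgE i, hE g hgE i'] at hpe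
      rw [hpe]
    obtain ⟨a, ha⟩ := hlabidx p ((hmemF p).2 hpX)
    obtain ⟨b, hb⟩ := hlabidx q ((hmemF q).2 hqX)
    refine Finset.mem_biUnion.2 ⟨(part p.1, a, b), Finset.mem_univ _, ?_⟩
    simp only [hSat, Finset.mem_filter]
    refine ⟨hgEF, p.1, q.1, ⟨i, hi⟩, ⟨i', hi'⟩, hpq, ?_⟩
    have h1 : σf (part p.1, a, b) p.1 = p.2 := by
      simp only [hσf, if_pos rfl]; exact ha
    have h2 : σf (part p.1, a, b) q.1 = q.2 := by
      simp only [hσf]; rw [if_neg (show ¬(part q.1 = part p.1) from fun e => hpart e.symm)]; exact hb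
    rw [h1, h2]
    exact hcol
  have hBcard : (B.card : ℝ) ≤ (r * (r - 1) * (r - 1) : ℕ) * (δ * (m : ℝ)) := by
    have h1 : B.card ≤ ∑ t : Fin r × Fin (r - 1) × Fin (r - 1), (Sat t).card :=
      le_trans (Finset.card_le_card hBsub) (Finset.card_biUnion_le)
    have h2 : ((∑ t : Fin r × Fin (r - 1) × Fin (r - 1), (Sat t).card : ℕ) : ℝ)
        ≤ ∑ _t : Fin r × Fin (r - 1) × Fin (r - 1), (δ * (m : ℝ)) := by
      push_cast
      exact Finset.sum_le_sum fun t _ => hsat t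
    have h3 : (∑ _t : Fin r × Fin (r - 1) × Fin (r - 1), (δ * (m : ℝ)))
        = (r * (r - 1) * (r - 1) : ℕ) * (δ * (m : ℝ)) := by
      rw [Finset.sum_const, Finset.card_univ]
      simp [mul_assoc]
    calc (B.card : ℝ) ≤ _ := Nat.cast_le.2 h1
      _ ≤ _ := h2
      _ = _ := h3
  -- final contradiction
  set R : ℝ := (r : ℝ) with hR
  set x : ℝ := ((r - 1 : ℕ) : ℝ) with hx
  have hx0 : (0 : ℝ) ≤ x := Nat.cast_nonneg _
  have hxle : x ≤ R := Nat.cast_le.2 (Nat.sub_le r 1)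
  have hR2 : (2 : ℝ) ≤ R := by rw [hR]; exact_mod_cast hr
  have hmpos : (0 : ℝ) < (m : ℝ) := Nat.cast_pos.2 hm0
  have hδm : (0 : ℝ) ≤ δ * (m : ℝ) := mul_nonneg hδ (le_of_lt hmpos)
  have A1 : (m : ℝ) ≤ (B.card : ℝ) * (R * x) := by
    calc (m : ℝ) ≤ ((B.card * (r * (r - 1)) : ℕ) : ℝ) := Nat.cast_le.mpr key1
      _ = (B.card : ℝ) * (R * x) := by push_cast; ring
  have A2 : (B.card : ℝ) ≤ (R * x * x) * (δ * (m : ℝ)) := by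
    calc (B.card : ℝ) ≤ ((r * (r - 1) * (r - 1) : ℕ) : ℝ) * (δ * (m : ℝ)) := hBcard
      _ = (R * x * x) * (δ * (m : ℝ)) := by push_cast; ring
  have hRx : (0 : ℝ) ≤ R * x := mul_nonneg (by linarith) hx0
  have c2 : R ^ 2 * x ^ 3 ≤ R ^ 5 := by
    have hxR : x ^ 3 ≤ R ^ 3 := pow_le_pow_left₀ hx0 hxle 3
    calc R ^ 2 * x ^ 3 ≤ R ^ 2 * R ^ 3 := by
          apply mul_le_mul_of_nonneg_left hxR (by positivity)
      _ = R ^ 5 := by ring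
  have c3 : R ^ 5 ≤ R ^ 7 := pow_le_pow_right₀ (by linarith) (by norm_num)
  have final : (m : ℝ) < (m : ℝ) := by
    calc (m : ℝ) ≤ (B.card : ℝ) * (R * x) := A1
      _ ≤ ((R * x * x) * (δ * (m : ℝ))) * (R * x) :=
          mul_le_mul_of_nonneg_right A2 hRx
      _ = (R ^ 2 * x ^ 3) * (δ * (m : ℝ)) := by ring
      _ ≤ R ^ 7 * (δ * (m : ℝ)) :=
          mul_le_mul_of_nonneg_right (c2.trans c3) hδm
      _ = (R ^ 7 * δ) * (m : ℝ) := by ring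
      _ < 1 * (m : ℝ) := mul_lt_mul_of_pos_right hδr hmpos
      _ = (m : ℝ) := one_mul _
  exact lt_irrefl _ final

/-- **No-instance lemma (uniform metric).**
In the Setup, assume: `r ≥ 2`; `|C| ≥ r`; each `{(A h c 1, …, A h c r)}_{c ∈ C}` is an
`(r,C)`-partition system on `Uh h`; `E` is (finite and) nonempty; every label set
`Lset j` is nonempty; every vertex of `G` has the same degree; and, for some real
`δ ≥ 0` with `r⁷·δ < 1`, every labeling `σ` (with `σ v ∈ Lset (part v)`) weakly
satisfies at most `δ·|E|` edges. Then for every finite set `𝒳'` of pairs `(v,ℓ)`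
with `ℓ ∈ Lset (part v)` and `|𝒳'| = |𝒱|`, some element `e ∈ U` has
`Cong(e, 𝒳') ≥ r`. -/
theorem stmt10 {r : ℕ} (hr : 2 ≤ r) {V L C U : Type} [Fintype V] [Fintype C]
    (hC : r ≤ Fintype.card C)
    (part : V → Fin r) (E : Set (Fin r → V)) (hEfin : E.Finite) (hEne : E.Nonempty)
    (hE : ∀ h ∈ E, ∀ i : Fin r, part (h i) = i)
    (Lset : Fin r → Set L) (hLfin : ∀ j, (Lset j).Finite) (hLne : ∀ j, (Lset j).Nonempty)
    (π : (Fin r → V) → Fin r → L → C)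
    (Uh : (Fin r → V) → Set U) (hUfin : ∀ h ∈ E, (Uh h).Finite)
    (hUdisj : ∀ h ∈ E, ∀ h' ∈ E, h ≠ h' → Disjoint (Uh h) (Uh h'))
    (hUcover : ∀ e : U, ∃ h ∈ E, e ∈ Uh h)
    (A : (Fin r → V) → C → Fin r → Set U)
    (hApart : ∀ h ∈ E, ∀ c : C, (⋃ j : Fin r, A h c j) = Uh h)
    (hAdisj : ∀ h ∈ E, ∀ c : C, ∀ j j' : Fin r, j ≠ j' → Disjoint (A h c j) (A h c j'))
    (hAint : ∀ h ∈ E, ∀ cs : Fin r → C, Function.Injective cs → ∀ js : Fin r → Fin r,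
      (⋂ i : Fin r, A h (cs i) (js i)).Nonempty)
    (hdeg : ∀ v w : V, ({h ∈ E | MemEdge h v}).ncard = ({h ∈ E | MemEdge h w}).ncard)
    (δ : ℝ) (hδ : 0 ≤ δ) (hδr : (r : ℝ) ^ 7 * δ < 1)
    (hsound : ∀ σ : V → L, (∀ v : V, σ v ∈ Lset (part v)) →
      (({h ∈ E | ∃ v v' : V, MemEdge h v ∧ MemEdge h v' ∧ v ≠ v' ∧
        π h (part v) (σ v) = π h (part v') (σ v')}).ncard : ℝ) ≤ δ * (E.ncard : ℝ)) :
    ∀ X' : Set (V × L), X'.Finite → (∀ p ∈ X', p.2 ∈ Lset (part p.1)) →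
      X'.ncard = Fintype.card V →
      ∃ e : U, r ≤ Cong part E π A X' e := by
  classical
  intro X' hX'fin hX'lab hX'card
  by_contra hcon
  push_neg at hcon
  have hpos : 0 < r := by omega
  exact absurd (stmt10' (U := U) hr hC part E hEfin hEne hE Lset hLne π hdeg δ hδ hδr hsound
    X' hX'fin hX'lab hX'card
    (fun h hh P hPX hPmem hPcard hnocol => by
      obtain ⟨e, he⟩ := catch_lemma hpos hC part E π A X' hX'fin h hh (hAint h hh)
        P hPX hPmem hPcard hnocol
      exact absurd he (not_le.2 (hcon e)))) (fun h => h)
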